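/- arXiv:1710.05232 — 17 statements merged into one kernel-verified Lean document; each statement's English description precedes it below -/
import Mathlib

section
/- If (A, V, R, S, ω) is a curved O-operator system associated to an extended A-bimodule algebra (V, ∘, ▷, ◁) with ω = ∘, then the operations x≻a = R(x)a, a≺x = aS(x), x⋗y = R(x)▷y, x⋖y = x◁S(y) + x∘y make (A, V, ≺, ≻, ⋖, ⋗) into a dendriform system. -/
/-- A : associative algebra, (V, ▷=tr, ◁=tl) an A-bimodule,
(V, circ, tr, tl) an extended A-bimodule algebra w.r.t. R, S,
and (A, V, R, S, circ) a curved O-operator system. -/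
theorem curved_O_operator_system_gives_dendriform_system
{K A V : Type*} [Field K] [Ring A] [Algebra K A]
    [AddCommGroup V] [Module K V]
    (tr : A →ₗ[K] V →ₗ[K] V) (tl : V →ₗ[K] A →ₗ[K] V)
    (hb1 : ∀ (a b : A) (x : V), tr a (tr b x) = tr (a * b) x)
    (hb2 : ∀ (x : V) (a b : A), tl (tl x a) b = tl x (a * b))
    (hb3 : ∀ (a : A) (x : V) (b : A), tl (tr a x) b = tr a (tl x b))
    (circ : V →ₗ[K] V →ₗ[K] V)
    (hcassoc : ∀ x y z : V, circ (circ x y) z = circ x (circ y z))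
    (R S : V →ₗ[K] A)
    (he1 : ∀ x y z : V, tr (R x) (circ y z) = circ (tr (R x) y) z)
    (he2 : ∀ x y z : V, tl (circ x y) (S z) = circ x (tl y (S z)))
    (he3 : ∀ x y z : V, circ x (tr (R y) z) = circ (tl x (S y)) z)
    (hR : ∀ x y : V, R x * R y = R (tr (R x) y + tl x (S y) + circ x y))
    (hS : ∀ x y : V, S x * S y = S (tr (R x) y + tl x (S y) + circ x y)) :
    ∀ (a : A) (x y z : V),
      -- (a ≺ x) ≺ y = a ≺ (x ⋗ y + x ⋖ y)
      ((a * S x) * S y = a * S (tr (R x) y + (tl x (S y) + circ x y))) ∧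
      -- x ≻ (a ≺ y) = (x ≻ a) ≺ y
      (R x * (a * S y) = (R x * a) * S y) ∧
      -- x ≻ (y ≻ a) = (x ⋗ y + x ⋖ y) ≻ a
      (R x * (R y * a) = R (tr (R x) y + (tl x (S y) + circ x y)) * a) ∧
      -- (x ⋖ y) ⋖ z = x ⋖ (y ⋗ z + y ⋖ z)
      (tl (tl x (S y) + circ x y) (S z) + circ (tl x (S y) + circ x y) z
        = tl x (S (tr (R y) z + (tl y (S z) + circ y z)))
          + circ x (tr (R y) z + (tl y (S z) + circ y z))) ∧
      -- x ⋗ (y ⋖ z) = (x ⋗ y) ⋖ z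
      (tr (R x) (tl y (S z) + circ y z)
        = tl (tr (R x) y) (S z) + circ (tr (R x) y) z) ∧
      -- x ⋗ (y ⋗ z) = (x ⋗ y + x ⋖ y) ⋗ z
      (tr (R x) (tr (R y) z)
        = tr (R (tr (R x) y + (tl x (S y) + circ x y))) z) := by
  intro a x y z
  refine ⟨?_, mul_assoc _ _ _ |>.symm, ?_, ?_, ?_, ?_⟩
  · rw [mul_assoc, hS]
    congr 2
    abel
  · rw [← mul_assoc, hR]
    congr 2
    abel
  · simp only [map_add, LinearMap.add_apply]
    rw [hb2, hS, he2, he3, ← hcassoc]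
    simp only [map_add, LinearMap.add_apply]
    abel
  · simp only [map_add]
    rw [hb3, he1]
  · rw [hb1, hR]
    congr 2
    abel
end

section
/- If (A, V, R, S, ω) is a curved O-operator system associated to an extended A-bimodule algebra (V, ∘, ▷, ◁) with ω = ∘, then the operations x≻a = R(x)a, a≺x = aS(x), x⋗y = R(x)▷y, x⋖y = x◁S(y), x·y = x∘y make (A, V, ≺, ≻, ⋖, ⋗, ·) into a tridendriform system. -/
/-- A : associative algebra, (V, ▷=tr, ◁=tl) an A-bimodule,
(V, circ, tr, tl) an extended A-bimodule algebra w.r.t. R, S,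
and (A, V, R, S, circ) a curved O-operator system. -/
theorem curved_O_operator_system_gives_tridendriform_system
{K A V : Type*} [Field K] [Ring A] [Algebra K A]
    [AddCommGroup V] [Module K V]
    (tr : A →ₗ[K] V →ₗ[K] V) (tl : V →ₗ[K] A →ₗ[K] V)
    (hb1 : ∀ (a b : A) (x : V), tr a (tr b x) = tr (a * b) x)
    (hb2 : ∀ (x : V) (a b : A), tl (tl x a) b = tl x (a * b))
    (hb3 : ∀ (a : A) (x : V) (b : A), tl (tr a x) b = tr a (tl x b))
    (circ : V →ₗ[K] V →ₗ[K] V)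
    (hcassoc : ∀ x y z : V, circ (circ x y) z = circ x (circ y z))
    (R S : V →ₗ[K] A)
    (he1 : ∀ x y z : V, tr (R x) (circ y z) = circ (tr (R x) y) z)
    (he2 : ∀ x y z : V, tl (circ x y) (S z) = circ x (tl y (S z)))
    (he3 : ∀ x y z : V, circ x (tr (R y) z) = circ (tl x (S y)) z)
    (hR : ∀ x y : V, R x * R y = R (tr (R x) y + tl x (S y) + circ x y))
    (hS : ∀ x y : V, S x * S y = S (tr (R x) y + tl x (S y) + circ x y)) :
    ∀ (a : A) (x y z : V),
      -- (a ≺ x) ≺ y = a ≺ (x ⋖ y + x ⋗ y + x · y)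
      ((a * S x) * S y = a * S (tl x (S y) + tr (R x) y + circ x y)) ∧
      -- x ≻ (a ≺ y) = (x ≻ a) ≺ y
      (R x * (a * S y) = (R x * a) * S y) ∧
      -- x ≻ (y ≻ a) = (x ⋖ y + x ⋗ y + x · y) ≻ a
      (R x * (R y * a) = R (tl x (S y) + tr (R x) y + circ x y) * a) ∧
      -- (x ⋖ y) ⋖ z = x ⋖ (y ⋖ z + y ⋗ z + y · z)
      (tl (tl x (S y)) (S z) = tl x (S (tl y (S z) + tr (R y) z + circ y z))) ∧
      -- x ⋗ (y ⋖ z) = (x ⋗ y) ⋖ z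
      (tr (R x) (tl y (S z)) = tl (tr (R x) y) (S z)) ∧
      -- x ⋗ (y ⋗ z) = (x ⋖ y + x ⋗ y + x · y) ⋗ z
      (tr (R x) (tr (R y) z) = tr (R (tl x (S y) + tr (R x) y + circ x y)) z) ∧
      -- (x ⋖ y) · z = x · (y ⋗ z)
      (circ (tl x (S y)) z = circ x (tr (R y) z)) ∧
      -- (x ⋗ y) · z = x ⋗ (y · z)
      (circ (tr (R x) y) z = tr (R x) (circ y z)) ∧
      -- (x · y) ⋖ z = x · (y ⋖ z)
      (tl (circ x y) (S z) = circ x (tl y (S z))) ∧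
      -- (x · y) · z = x · (y · z)
      (circ (circ x y) z = circ x (circ y z)) := by
  intro a x y z
  have key : ∀ x y : V, tl x (S y) + tr (R x) y + circ x y
      = tr (R x) y + tl x (S y) + circ x y := fun x y => by abel
  refine ⟨?_, (mul_assoc _ _ _).symm, ?_, ?_, (hb3 _ _ _).symm, ?_,
    (he3 x y z).symm, (he1 x y z).symm, he2 x y z, hcassoc x y z⟩
  · rw [key, ← hS, mul_assoc]
  · rw [key, ← hR, mul_assoc]
  · rw [key, ← hS, ← hb2]
  · rw [key, ← hR, ← hb1]
end

section
/- Let A be an algebra, (V, ∘, ▷, ◁) an extended A-bimodule algebra, and R, S: V→A linear maps. Define x⋆y = R(x)▷y + x◁S(y) + x∘y. Then (V, ⋆) is an associative algebra if and only if for all x,y,z∈V: (R(x)R(y) − R(x⋆y))▷z = x◁(S(y)S(z) − S(y⋆z)). -/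
/-- Associativity criterion for ⋆ on an extended A-bimodule algebra. -/
theorem star_assoc_iff_extended
{K A V : Type*} [Field K] [Ring A] [Algebra K A]
    [AddCommGroup V] [Module K V]
    (tr : A →ₗ[K] V →ₗ[K] V) (tl : V →ₗ[K] A →ₗ[K] V)
    (hb1 : ∀ (a b : A) (x : V), tr a (tr b x) = tr (a * b) x)
    (hb2 : ∀ (x : V) (a b : A), tl (tl x a) b = tl x (a * b))
    (hb3 : ∀ (a : A) (x : V) (b : A), tl (tr a x) b = tr a (tl x b))
    (circ : V →ₗ[K] V →ₗ[K] V)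
    (hcassoc : ∀ x y z : V, circ (circ x y) z = circ x (circ y z))
    (R S : V →ₗ[K] A)
    (he1 : ∀ x y z : V, tr (R x) (circ y z) = circ (tr (R x) y) z)
    (he2 : ∀ x y z : V, tl (circ x y) (S z) = circ x (tl y (S z)))
    (he3 : ∀ x y z : V, circ x (tr (R y) z) = circ (tl x (S y)) z)
    (star : V → V → V)
    (hstar : ∀ x y : V, star x y = tr (R x) y + tl x (S y) + circ x y) :
    (∀ x y z : V, star (star x y) z = star x (star y z)) ↔
      (∀ x y z : V,
        tr (R x * R y - R (star x y)) z = tl x (S y * S z - S (star y z))) := by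
  have key : ∀ x y z : V, star (star x y) z - star x (star y z) =
      tl x (S y * S z - S (star y z)) - tr (R x * R y - R (star x y)) z := by
    intro x y z
    simp only [hstar x y, hstar y z]
    simp only [hstar, map_add, map_sub, map_mul, LinearMap.add_apply,
      LinearMap.sub_apply, hb2, hb3, he2, ← he1, ← he3, hcassoc, ← hb1]
    abel
  constructor <;> intro h x y z
  · have hk := key x y z
    rw [h, sub_self] at hk
    exact ((sub_eq_zero.mp hk.symm).symm)
  · have hk := key x y z
    rw [h x y z, sub_self] at hk
    exact sub_eq_zero.mp hk
end

section
/- If (A, V, R, S, ∘) is a curved O-operator system associated to (V,▷,◁) where (V, ∘, ▷, ◁) is an extended A-bimodule algebra, then (V, ⋆) with x⋆y = R(x)▷y + x◁S(y) + x∘y is an associative algebra. -/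
/-- A : associative algebra, (V, ▷=tr, ◁=tl) an A-bimodule,
(V, circ, tr, tl) an extended A-bimodule algebra w.r.t. R, S,
and (A, V, R, S, circ) a curved O-operator system. -/
theorem curved_O_operator_system_star_associative
{K A V : Type*} [Field K] [Ring A] [Algebra K A]
    [AddCommGroup V] [Module K V]
    (tr : A →ₗ[K] V →ₗ[K] V) (tl : V →ₗ[K] A →ₗ[K] V)
    (hb1 : ∀ (a b : A) (x : V), tr a (tr b x) = tr (a * b) x)
    (hb2 : ∀ (x : V) (a b : A), tl (tl x a) b = tl x (a * b))
    (hb3 : ∀ (a : A) (x : V) (b : A), tl (tr a x) b = tr a (tl x b))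
    (circ : V →ₗ[K] V →ₗ[K] V)
    (hcassoc : ∀ x y z : V, circ (circ x y) z = circ x (circ y z))
    (R S : V →ₗ[K] A)
    (he1 : ∀ x y z : V, tr (R x) (circ y z) = circ (tr (R x) y) z)
    (he2 : ∀ x y z : V, tl (circ x y) (S z) = circ x (tl y (S z)))
    (he3 : ∀ x y z : V, circ x (tr (R y) z) = circ (tl x (S y)) z)
    (hR : ∀ x y : V, R x * R y = R (tr (R x) y + tl x (S y) + circ x y))
    (hS : ∀ x y : V, S x * S y = S (tr (R x) y + tl x (S y) + circ x y))
    (star : V → V → V)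
    (hstar : ∀ x y : V, star x y = tr (R x) y + tl x (S y) + circ x y) :
    ∀ x y z : V, star (star x y) z = star x (star y z) := by
  intro x y z
  simp only [hstar, map_add, LinearMap.add_apply, ← hR, ← hS,
    ← hb1, ← hb2, hb3, he1, he2, he3, hcassoc]
  abel
end

section
/- Let A be an algebra, (V, ∘, ▷, ◁) an A-bimodule algebra, and R: V→A linear. The operation x⋆y = R(x)▷y + x◁R(y) + x∘y is associative if and only if (R(x)R(y) − R(x⋆y))▷z = x◁(R(y)R(z) − R(y⋆z)) for all x,y,z∈V. -/
/-- Associativity criterion for ⋆_R on an A-bimodule algebra. -/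
theorem starR_assoc_iff
{K A V : Type*} [Field K] [Ring A] [Algebra K A]
    [AddCommGroup V] [Module K V]
    (tr : A →ₗ[K] V →ₗ[K] V) (tl : V →ₗ[K] A →ₗ[K] V)
    (hb1 : ∀ (a b : A) (x : V), tr a (tr b x) = tr (a * b) x)
    (hb2 : ∀ (x : V) (a b : A), tl (tl x a) b = tl x (a * b))
    (hb3 : ∀ (a : A) (x : V) (b : A), tl (tr a x) b = tr a (tl x b))
    (circ : V →ₗ[K] V →ₗ[K] V)
    (hcassoc : ∀ x y z : V, circ (circ x y) z = circ x (circ y z))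
(hba1 : ∀ (a : A) (x y : V), tr a (circ x y) = circ (tr a x) y)
    (hba2 : ∀ (x y : V) (a : A), tl (circ x y) a = circ x (tl y a))
    (hba3 : ∀ (x : V) (a : A) (y : V), circ x (tr a y) = circ (tl x a) y)
    (R : V →ₗ[K] A)
    (star : V → V → V)
    (hstar : ∀ x y : V, star x y = tr (R x) y + tl x (R y) + circ x y) :
    (∀ x y z : V, star (star x y) z = star x (star y z)) ↔
      (∀ x y z : V,
        tr (R x * R y - R (star x y)) z = tl x (R y * R z - R (star y z))) := by
  have key : ∀ x y z : V,
      star (star x y) z + tr (R x * R y - R (star x y)) z =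
        star x (star y z) + tl x (R y * R z - R (star y z)) := by
    intro x y z
    simp only [hstar, map_add, map_sub, LinearMap.add_apply, LinearMap.sub_apply,
      hb1, hb2, hb3, hcassoc, ← hba1, hba2, hba3]
    abel
  constructor
  · intro h x y z
    have hk := key x y z
    rw [h] at hk
    exact add_left_cancel hk
  · intro h x y z
    have hk := key x y z
    rw [h x y z] at hk
    exact add_right_cancel hk
end

section
/- Let char K ≠ 2, A an algebra, (V, ∘, ▷, ◁) an A-bimodule algebra, R,S: V→A, and let α=(R+S)/2, β=(R−S)/2. If β is balanced of mass 1, i.e. β(x)▷y = x◁β(y) for all x,y, then (V,⋆) with x⋆y = R(x)▷y + x◁S(y) + x∘y is associative if and only if (α(x)α(y) − α(x⋆_α y))▷z = x◁(α(y)α(z) − α(y⋆_α z)) for all x,y,z, where x⋆_α y = α(x)▷y + x◁α(y) + x∘y. -/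
/-- Symmetrizer/antisymmetrizer criterion: if β = (R-S)/2 is balanced of mass 1
then ⋆ is associative iff α = (R+S)/2 satisfies the associativity criterion. -/
theorem star_assoc_iff_symmetrizer
{K A V : Type*} [Field K] [Ring A] [Algebra K A]
    [AddCommGroup V] [Module K V]
    (tr : A →ₗ[K] V →ₗ[K] V) (tl : V →ₗ[K] A →ₗ[K] V)
    (hb1 : ∀ (a b : A) (x : V), tr a (tr b x) = tr (a * b) x)
    (hb2 : ∀ (x : V) (a b : A), tl (tl x a) b = tl x (a * b))
    (hb3 : ∀ (a : A) (x : V) (b : A), tl (tr a x) b = tr a (tl x b))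
    (circ : V →ₗ[K] V →ₗ[K] V)
    (hcassoc : ∀ x y z : V, circ (circ x y) z = circ x (circ y z))
(hba1 : ∀ (a : A) (x y : V), tr a (circ x y) = circ (tr a x) y)
    (hba2 : ∀ (x y : V) (a : A), tl (circ x y) a = circ x (tl y a))
    (hba3 : ∀ (x : V) (a : A) (y : V), circ x (tr a y) = circ (tl x a) y)
    (hchar : (2 : K) ≠ 0)
    (R S : V →ₗ[K] A)
    (α β : V →ₗ[K] A)
    (hα : α = (2 : K)⁻¹ • (R + S))
    (hβ : β = (2 : K)⁻¹ • (R - S))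
    (hbal : ∀ x y : V, tr (β x) y = tl x (β y))
    (star starα : V → V → V)
    (hstar : ∀ x y : V, star x y = tr (R x) y + tl x (S y) + circ x y)
    (hstarα : ∀ x y : V, starα x y = tr (α x) y + tl x (α y) + circ x y) :
    (∀ x y z : V, star (star x y) z = star x (star y z)) ↔
      (∀ x y z : V,
        tr (α x * α y - α (starα x y)) z = tl x (α y * α z - α (starα y z))) := by

  -- R = α + β, S = α - β
  have hR : R = α + β := by
    rw [hα, hβ]
    rw [← smul_add]
    have : R + S + (R - S) = (2:K) • R := by
      rw [two_smul]; abel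
    rw [this, smul_smul, inv_mul_cancel₀ hchar, one_smul]
  have hS : S = α - β := by
    rw [hα, hβ]
    rw [show (2:K)⁻¹ • (R + S) - (2:K)⁻¹ • (R - S) = (2:K)⁻¹ • (R + S - (R - S)) from (smul_sub _ _ _).symm]
    have : R + S - (R - S) = (2:K) • S := by
      rw [two_smul]; abel
    rw [this, smul_smul, inv_mul_cancel₀ hchar, one_smul]
  -- star = starα
  have hse : ∀ x y : V, star x y = starα x y := by
    intro x y
    rw [hstar, hstarα, hR, hS]
    simp only [LinearMap.add_apply, LinearMap.sub_apply, map_add, map_sub,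
      LinearMap.add_apply, hbal x y]
    abel
  -- key identity
  have key : ∀ x y z : V,
      starα (starα x y) z - starα x (starα y z)
        = tl x (α y * α z - α (starα y z)) - tr (α x * α y - α (starα x y)) z := by
    intro x y z
    simp only [hstarα]
    simp only [map_add, map_sub, LinearMap.add_apply, LinearMap.sub_apply,
      hb1, hb2, hb3, hba1, hba2, hba3, hcassoc]
    abel
  constructor
  · intro h x y z
    have hA : starα (starα x y) z = starα x (starα y z) := by
      rw [← hse x y, ← hse y z, ← hse (star x y) z, ← hse x (star y z)]
      exact h x y z
    have := key x y z
    rw [hA, sub_self] at this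
    exact (sub_eq_zero.mp this.symm).symm
  · intro h x y z
    have := key x y z
    rw [h x y z, sub_self] at this
    rw [hse (star x y) z, hse x (star y z), hse x y, hse y z]
    exact sub_eq_zero.mp this
end

section
/- Let (A, V, R, S, ω) be a curved O-operator system associated to (V,▷,◁), and set ω₁ = R∘ω, ω₂ = S∘ω. Define x⋄y = R(x)▷y + x◁S(y). Then (V, ⋄) is an associative algebra if and only if ω₁(x⊗y)▷z = x◁ω₂(y⊗z) for all x,y,z∈V. -/
/-- For a curved O-operator system, x⋄y = R(x)▷y + x◁S(y) is associative iff
ω₁(x⊗y)▷z = x◁ω₂(y⊗z), where ω₁ = R∘ω and ω₂ = S∘ω. -/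
theorem diamond_assoc_iff_curvature
    {K A V : Type*} [Field K] [Ring A] [Algebra K A]
    [AddCommGroup V] [Module K V]
    (tr : A →ₗ[K] V →ₗ[K] V) (tl : V →ₗ[K] A →ₗ[K] V)
    (hb1 : ∀ (a b : A) (x : V), tr a (tr b x) = tr (a * b) x)
    (hb2 : ∀ (x : V) (a b : A), tl (tl x a) b = tl x (a * b))
    (hb3 : ∀ (a : A) (x : V) (b : A), tl (tr a x) b = tr a (tl x b))
    (R S : V →ₗ[K] A) (ω : V →ₗ[K] V →ₗ[K] V)
    (hR : ∀ x y : V, R x * R y = R (tr (R x) y + tl x (S y) + ω x y))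
    (hS : ∀ x y : V, S x * S y = S (tr (R x) y + tl x (S y) + ω x y))
    (diamond : V → V → V)
    (hdiamond : ∀ x y : V, diamond x y = tr (R x) y + tl x (S y)) :
    (∀ x y z : V, diamond (diamond x y) z = diamond x (diamond y z)) ↔
      (∀ x y z : V, tr (R (ω x y)) z = tl x (S (ω y z))) := by
  have h1 : ∀ x y : V, R (tr (R x) y + tl x (S y)) = R x * R y - R (ω x y) := by
    intro x y
    rw [eq_sub_iff_add_eq, ← map_add]
    exact (hR x y).symm
  have h2 : ∀ x y : V, S (tr (R x) y + tl x (S y)) = S x * S y - S (ω x y) := by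
    intro x y
    rw [eq_sub_iff_add_eq, ← map_add]
    exact (hS x y).symm
  have key : ∀ x y z : V,
      diamond (diamond x y) z + tr (R (ω x y)) z
        = diamond x (diamond y z) + tl x (S (ω y z)) := by
    intro x y z
    simp only [hdiamond, h1, h2, map_add, map_sub, LinearMap.add_apply,
      LinearMap.sub_apply, ← hb1, ← hb2, hb3]
    abel
  constructor
  · intro h x y z
    have hk := key x y z
    rw [h x y z] at hk
    exact add_left_cancel hk
  · intro h x y z
    have hk := key x y z
    rw [h x y z] at hk
    exact add_right_cancel hk
end

section
/- Let A be an algebra, (V, ∘, ▷, ◁) an A-bimodule algebra, and R: V→A an O-operator of weight λ, i.e. R(x)R(y)=R(R(x)▷y + x◁R(y) + λ x∘y). Then the operation x⊙y = R(x)▷y + x◁R(y) is associative if and only if λ R(x∘y)▷z = λ x◁R(y∘z) for all x,y,z∈V. -/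
/-- For an O-operator R of weight λ, x⊙y = R(x)▷y + x◁R(y) is associative iff
λ R(x∘y)▷z = λ x◁R(y∘z). -/
theorem odot_assoc_iff
{K A V : Type*} [Field K] [Ring A] [Algebra K A]
    [AddCommGroup V] [Module K V]
    (tr : A →ₗ[K] V →ₗ[K] V) (tl : V →ₗ[K] A →ₗ[K] V)
    (hb1 : ∀ (a b : A) (x : V), tr a (tr b x) = tr (a * b) x)
    (hb2 : ∀ (x : V) (a b : A), tl (tl x a) b = tl x (a * b))
    (hb3 : ∀ (a : A) (x : V) (b : A), tl (tr a x) b = tr a (tl x b))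
    (circ : V →ₗ[K] V →ₗ[K] V)
    (hcassoc : ∀ x y z : V, circ (circ x y) z = circ x (circ y z))
(hba1 : ∀ (a : A) (x y : V), tr a (circ x y) = circ (tr a x) y)
    (hba2 : ∀ (x y : V) (a : A), tl (circ x y) a = circ x (tl y a))
    (hba3 : ∀ (x : V) (a : A) (y : V), circ x (tr a y) = circ (tl x a) y)
    (lam : K) (R : V →ₗ[K] A)
    (hR : ∀ x y : V, R x * R y = R (tr (R x) y + tl x (R y) + lam • circ x y))
    (odot : V → V → V)
    (hodot : ∀ x y : V, odot x y = tr (R x) y + tl x (R y)) :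
    (∀ x y z : V, odot (odot x y) z = odot x (odot y z)) ↔
      (∀ x y z : V, lam • tr (R (circ x y)) z = lam • tl x (R (circ y z))) := by
  have key : ∀ x y z : V,
      odot (odot x y) z + lam • tr (R (circ x y)) z
        = odot x (odot y z) + lam • tl x (R (circ y z)) := by
    intro x y z
    have h1 : R (tr (R x) y + tl x (R y))
        = R x * R y - lam • R (circ x y) := by
      rw [hR x y]; simp only [map_add, map_smul]; abel
    have h2 : R (tr (R y) z + tl y (R z))
        = R y * R z - lam • R (circ y z) := by
      rw [hR y z]; simp only [map_add, map_smul]; abel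
    simp only [hodot, h1, h2, map_add, map_sub, map_smul, map_mul,
      LinearMap.add_apply, LinearMap.sub_apply, LinearMap.smul_apply,
      hb1, hb2, hb3]
    rw [← hb1 (R x) (R y) z, ← hb3 (R x) y (R z)]
    abel
  constructor
  · intro h x y z
    have := key x y z
    rw [h x y z] at this
    exact add_left_cancel this
  · intro h x y z
    have := key x y z
    rw [h x y z] at this
    exact add_right_cancel this
end

section
/- If (A, V, R, S, ∘) is a curved O-operator system associated to (V,▷,◁) where (V, ∘, ▷, ◁) is an extended A-bimodule algebra, then (V, ♦) with x♦y = R(x)▷y − y◁S(x) + x∘y is a pre-Lie algebra, i.e. (x♦y)♦z − x♦(y♦z) = (y♦x)♦z − y♦(x♦z) for all x,y,z∈V. -/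
/-- A : associative algebra, (V, ▷=tr, ◁=tl) an A-bimodule,
(V, circ, tr, tl) an extended A-bimodule algebra w.r.t. R, S,
and (A, V, R, S, circ) a curved O-operator system. -/
theorem curved_O_operator_system_gives_preLie
{K A V : Type*} [Field K] [Ring A] [Algebra K A]
    [AddCommGroup V] [Module K V]
    (tr : A →ₗ[K] V →ₗ[K] V) (tl : V →ₗ[K] A →ₗ[K] V)
    (hb1 : ∀ (a b : A) (x : V), tr a (tr b x) = tr (a * b) x)
    (hb2 : ∀ (x : V) (a b : A), tl (tl x a) b = tl x (a * b))
    (hb3 : ∀ (a : A) (x : V) (b : A), tl (tr a x) b = tr a (tl x b))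
    (circ : V →ₗ[K] V →ₗ[K] V)
    (hcassoc : ∀ x y z : V, circ (circ x y) z = circ x (circ y z))
    (R S : V →ₗ[K] A)
    (he1 : ∀ x y z : V, tr (R x) (circ y z) = circ (tr (R x) y) z)
    (he2 : ∀ x y z : V, tl (circ x y) (S z) = circ x (tl y (S z)))
    (he3 : ∀ x y z : V, circ x (tr (R y) z) = circ (tl x (S y)) z)
    (hR : ∀ x y : V, R x * R y = R (tr (R x) y + tl x (S y) + circ x y))
    (hS : ∀ x y : V, S x * S y = S (tr (R x) y + tl x (S y) + circ x y))
    (lozenge : V → V → V)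
    (hloz : ∀ x y : V, lozenge x y = tr (R x) y - tl y (S x) + circ x y) :
    ∀ x y z : V,
      lozenge (lozenge x y) z - lozenge x (lozenge y z)
        = lozenge (lozenge y x) z - lozenge y (lozenge x z) := by
  intro x y z
  simp only [hloz, map_add, map_sub, LinearMap.add_apply, LinearMap.sub_apply,
    hb1, hb2, hb3, he1, he2, he3, hcassoc, hR, hS]
  abel
end

section
/- Let (V, μ, ν, R) be a generalized Rota-Baxter algebra such that (μ, ν) is an associative compatible pair on V (write μ(x⊗y)=xy, ν(x⊗y)=x⋄y). Then defining x≺y = xR(y) + x⋄y and x≻y = R(x)y makes (V, ≺, ≻) a dendriform algebra: (x≺y)≺z = x≺(y≺z + y≻z), (x≻y)≺z = x≻(y≺z), x≻(y≻z) = (x≺y + x≻y)≻z. -/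
/-- A generalized Rota-Baxter algebra over an associative compatible pair
(m, d) gives a dendriform algebra via x≺y = xR(y) + x⋄y, x≻y = R(x)y. -/
theorem generalized_RotaBaxter_gives_dendriform
{K V : Type*} [Field K] [AddCommGroup V] [Module K V]
    (m d : V →ₗ[K] V →ₗ[K] V)
    (hm : ∀ x y z : V, m (m x y) z = m x (m y z))
    (hd : ∀ x y z : V, d (d x y) z = d x (d y z))
    (hc1 : ∀ x y z : V, d (m x y) z = m x (d y z))
    (hc2 : ∀ x y z : V, m x (d y z) = m (d x y) z)
    (hc3 : ∀ x y z : V, m (d x y) z = d x (m y z))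
    (R : V →ₗ[K] V)
    (hRB : ∀ x y : V, m (R x) (R y) = R (m (R x) y + m x (R y) + d x y)) :
    ∀ x y z : V,
      -- (x ≺ y) ≺ z = x ≺ (y ≺ z + y ≻ z)
      (m (m x (R y) + d x y) (R z) + d (m x (R y) + d x y) z
        = m x (R (m y (R z) + d y z + m (R y) z))
          + d x (m y (R z) + d y z + m (R y) z)) ∧
      -- (x ≻ y) ≺ z = x ≻ (y ≺ z)
      (m (m (R x) y) (R z) + d (m (R x) y) z = m (R x) (m y (R z) + d y z)) ∧
      -- x ≻ (y ≻ z) = (x ≺ y + x ≻ y) ≻ z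
      (m (R x) (m (R y) z) = m (R (m x (R y) + d x y + m (R x) y)) z) := by
  intro x y z
  refine ⟨?_, ?_, ?_⟩
  · have h : m y (R z) + d y z + m (R y) z = m (R y) z + m y (R z) + d y z := by abel
    rw [h, ← hRB]
    simp only [map_add, LinearMap.add_apply]
    rw [hm, hc3, hc1, hc2, hd, hc3]
    abel
  · simp only [map_add]
    rw [hm, hc1]
  · have h : m x (R y) + d x y + m (R x) y = m (R x) y + m x (R y) + d x y := by abel
    rw [h, ← hRB, hm]
end

section
/- Let (V, μ, ν, R) be a generalized Rota-Baxter algebra with (μ, ν) an associative compatible pair. Then x∘y = R(x)y − yR(x) + x⋄y defines a pre-Lie algebra structure on V. -/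
/-- A generalized Rota-Baxter algebra gives a pre-Lie algebra via
x∘y = R(x)y − yR(x) + x⋄y. -/
theorem generalized_RotaBaxter_gives_preLie
{K V : Type*} [Field K] [AddCommGroup V] [Module K V]
    (m d : V →ₗ[K] V →ₗ[K] V)
    (hm : ∀ x y z : V, m (m x y) z = m x (m y z))
    (hd : ∀ x y z : V, d (d x y) z = d x (d y z))
    (hc1 : ∀ x y z : V, d (m x y) z = m x (d y z))
    (hc2 : ∀ x y z : V, m x (d y z) = m (d x y) z)
    (hc3 : ∀ x y z : V, m (d x y) z = d x (m y z))
    (R : V →ₗ[K] V)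
    (hRB : ∀ x y : V, m (R x) (R y) = R (m (R x) y + m x (R y) + d x y))
    (p : V → V → V)
    (hp : ∀ x y : V, p x y = m (R x) y - m y (R x) + d x y) :
    ∀ x y z : V,
      p (p x y) z - p x (p y z) = p (p y x) z - p y (p x z) := by
  have key : ∀ a b : V,
      R (p a b) = m (R a) (R b) - R (m a (R b)) - R (m b (R a)) := by
    intro a b
    rw [hp, map_add, map_sub, hRB, map_add, map_add]
    abel
  intro x y z
  rw [hp (p x y) z, hp x (p y z), hp (p y x) z, hp y (p x z),
    key x y, key y x, hp y z, hp x z, hp x y, hp y x]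
  simp only [map_add, map_sub, LinearMap.add_apply, LinearMap.sub_apply,
    hm, hd, hc1, hc2, hc3]
  abel
end

section
/- Let (V, μ, ν, R) be a generalized Rota-Baxter algebra with (μ, ν) an associative compatible pair. Then x≺y = xR(y), x≻y = R(x)y, x·y = x⋄y define a tridendriform algebra structure on V. -/
/-- A generalized Rota-Baxter algebra gives a tridendriform algebra via
x≺y = xR(y), x≻y = R(x)y, x·y = x⋄y. -/
theorem generalized_RotaBaxter_gives_tridendriform
{K V : Type*} [Field K] [AddCommGroup V] [Module K V]
    (m d : V →ₗ[K] V →ₗ[K] V)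
    (hm : ∀ x y z : V, m (m x y) z = m x (m y z))
    (hd : ∀ x y z : V, d (d x y) z = d x (d y z))
    (hc1 : ∀ x y z : V, d (m x y) z = m x (d y z))
    (hc2 : ∀ x y z : V, m x (d y z) = m (d x y) z)
    (hc3 : ∀ x y z : V, m (d x y) z = d x (m y z))
    (R : V →ₗ[K] V)
    (hRB : ∀ x y : V, m (R x) (R y) = R (m (R x) y + m x (R y) + d x y)) :
    ∀ x y z : V,
      -- (x ≺ y) ≺ z = x ≺ (y ≺ z + y ≻ z + y · z)
      (m (m x (R y)) (R z) = m x (R (m y (R z) + m (R y) z + d y z))) ∧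
      -- (x ≻ y) ≺ z = x ≻ (y ≺ z)
      (m (m (R x) y) (R z) = m (R x) (m y (R z))) ∧
      -- x ≻ (y ≻ z) = (x ≺ y + x ≻ y + x · y) ≻ z
      (m (R x) (m (R y) z) = m (R (m x (R y) + m (R x) y + d x y)) z) ∧
      -- (x ≻ y) · z = x ≻ (y · z)
      (d (m (R x) y) z = m (R x) (d y z)) ∧
      -- (x ≺ y) · z = x · (y ≻ z)
      (d (m x (R y)) z = d x (m (R y) z)) ∧
      -- (x · y) ≺ z = x · (y ≺ z)
      (m (d x y) (R z) = d x (m y (R z))) ∧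
      -- (x · y) · z = x · (y · z)
      (d (d x y) z = d x (d y z)) := by
  intro x y z
  refine ⟨?_, hm _ _ _, ?_, hc1 _ _ _, ?_, hc3 _ _ _, hd _ _ _⟩
  · rw [hm, show m y (R z) + m (R y) z + d y z = m (R y) z + m y (R z) + d y z by abel,
      ← hRB]
  · rw [← hm, hRB, show m x (R y) + m (R x) y + d x y = m (R x) y + m x (R y) + d x y by abel]
  · rw [hc1, hc2, hc3]
end

section
/- Let (V, μ, ν, R) be a generalized Rota-Baxter algebra with (μ, ν) an associative compatible pair. Then x∗y = R(x)y + xR(y) + x⋄y defines an associative product on V. -/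
/-- A generalized Rota-Baxter algebra gives an associative product
x∗y = R(x)y + xR(y) + x⋄y. -/
theorem generalized_RotaBaxter_gives_associative
{K V : Type*} [Field K] [AddCommGroup V] [Module K V]
    (m d : V →ₗ[K] V →ₗ[K] V)
    (hm : ∀ x y z : V, m (m x y) z = m x (m y z))
    (hd : ∀ x y z : V, d (d x y) z = d x (d y z))
    (hc1 : ∀ x y z : V, d (m x y) z = m x (d y z))
    (hc2 : ∀ x y z : V, m x (d y z) = m (d x y) z)
    (hc3 : ∀ x y z : V, m (d x y) z = d x (m y z))
    (R : V →ₗ[K] V)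
    (hRB : ∀ x y : V, m (R x) (R y) = R (m (R x) y + m x (R y) + d x y))
    (ast : V → V → V)
    (hast : ∀ x y : V, ast x y = m (R x) y + m x (R y) + d x y) :
    ∀ x y z : V, ast (ast x y) z = ast x (ast y z) := by
  intro x y z
  simp only [hast, map_add, LinearMap.add_apply, ← hRB]
  simp only [map_add, LinearMap.add_apply, hm, hd, hc1, hc3, hc2]
  abel
end

section
/- Let (A, R, S, ω₁, ω₂) be a double curved Rota-Baxter system. Define a∗b = R(a)b + aS(b). Then (A, ∗) is associative if and only if ω₁(a⊗b)c = aω₂(b⊗c) for all a,b,c∈A. -/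
/-- For a double curved Rota-Baxter system, a∗b = R(a)b + aS(b) is associative
iff ω₁(a⊗b)c = aω₂(b⊗c). -/
theorem doubleCurved_RotaBaxter_ast_assoc_iff
{K A : Type*} [Field K] [Ring A] [Algebra K A]
    (R S : A →ₗ[K] A) (w1 w2 : A →ₗ[K] A →ₗ[K] A)
    (hR : ∀ a b : A, R a * R b = R (R a * b + a * S b) + w1 a b)
    (hS : ∀ a b : A, S a * S b = S (R a * b + a * S b) + w2 a b)
    (ast : A → A → A)
    (hast : ∀ a b : A, ast a b = R a * b + a * S b) :
    (∀ a b c : A, ast (ast a b) c = ast a (ast b c)) ↔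
      (∀ a b c : A, w1 a b * c = a * w2 b c) := by
  have key : ∀ a b c : A, ast (ast a b) c + w1 a b * c = ast a (ast b c) + a * w2 b c := by
    intro a b c
    have e1 : R (R a * b + a * S b) = R a * R b - w1 a b :=
      eq_sub_iff_add_eq.mpr (hR a b).symm
    have e2 : S (R b * c + b * S c) = S b * S c - w2 b c :=
      eq_sub_iff_add_eq.mpr (hS b c).symm
    simp only [hast, e1, e2]
    noncomm_ring
  constructor
  · intro h a b c
    have k := key a b c
    rw [h] at k
    exact add_left_cancel k
  · intro h a b c
    have k := key a b c
    rw [h] at k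
    exact add_right_cancel k
end

section
/- Let T: A⊗A→A⊗A be a double curved weak pseudotwistor with weak companion 𝒯 and curvatures ω₁, ω₂ on an associative algebra (A, μ). Then μ∘T is an associative product on A. -/
open TensorProduct

/-- A double curved weak pseudotwistor T with weak companion Tt and curvatures
w1, w2 makes μ∘T an associative product on A. -/
theorem doubleCurved_weakPseudotwistor_gives_associative
    {K A : Type*} [Field K] [Ring A] [Algebra K A]
    (T : A ⊗[K] A →ₗ[K] A ⊗[K] A)
    (Tt : A ⊗[K] (A ⊗[K] A) →ₗ[K] A ⊗[K] (A ⊗[K] A))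
    (w1 w2 : A ⊗[K] A →ₗ[K] A)
    -- T ∘ (id ⊗ (μ∘T)) = (id ⊗ μ) ∘ Tt − id ⊗ w2
    (h1 : T ∘ₗ LinearMap.lTensor A (LinearMap.mul' K A ∘ₗ T)
        = LinearMap.lTensor A (LinearMap.mul' K A) ∘ₗ Tt
          - LinearMap.lTensor A w2)
    -- T ∘ ((μ∘T) ⊗ id) = (μ ⊗ id) ∘ Tt − w1 ⊗ id
    (h2 : T ∘ₗ (LinearMap.rTensor A (LinearMap.mul' K A ∘ₗ T)
            ∘ₗ (TensorProduct.assoc K A A A).symm.toLinearMap)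
        = (LinearMap.rTensor A (LinearMap.mul' K A)
            ∘ₗ (TensorProduct.assoc K A A A).symm.toLinearMap) ∘ₗ Tt
          - LinearMap.rTensor A w1
            ∘ₗ (TensorProduct.assoc K A A A).symm.toLinearMap)
    -- μ ∘ (w1 ⊗ id) = μ ∘ (id ⊗ w2)
    (h3 : LinearMap.mul' K A ∘ₗ (LinearMap.rTensor A w1
            ∘ₗ (TensorProduct.assoc K A A A).symm.toLinearMap)
        = LinearMap.mul' K A ∘ₗ LinearMap.lTensor A w2) :
    ∀ a b c : A,
      LinearMap.mul' K A (T ((LinearMap.mul' K A (T (a ⊗ₜ[K] b))) ⊗ₜ[K] c))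
        = LinearMap.mul' K A (T (a ⊗ₜ[K] LinearMap.mul' K A (T (b ⊗ₜ[K] c)))) := by
  intro a b c
  have key : ∀ y : A ⊗[K] (A ⊗[K] A),
      LinearMap.mul' K A (LinearMap.lTensor A (LinearMap.mul' K A) y)
        = LinearMap.mul' K A (LinearMap.rTensor A (LinearMap.mul' K A)
            ((TensorProduct.assoc K A A A).symm y)) := by
    intro y
    induction y using TensorProduct.induction_on with
    | zero => rw [map_zero, map_zero, LinearEquiv.map_zero, map_zero, map_zero]
    | tmul x yz =>
      induction yz using TensorProduct.induction_on with
      | zero => rw [TensorProduct.tmul_zero, map_zero, map_zero, LinearEquiv.map_zero, map_zero, map_zero]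
      | tmul u v =>
        rw [LinearMap.lTensor_tmul, TensorProduct.assoc_symm_tmul, LinearMap.rTensor_tmul]
        simp [mul_assoc]
      | add p q hp hq =>
        rw [TensorProduct.tmul_add, map_add, map_add, LinearEquiv.map_add, map_add, map_add, hp, hq]
    | add p q hp hq => rw [map_add, map_add, LinearEquiv.map_add, map_add, map_add, hp, hq]
  have H1 := congrArg (fun f => LinearMap.mul' K A (f (a ⊗ₜ[K] (b ⊗ₜ[K] c)))) h1
  have H2 := congrArg (fun f => LinearMap.mul' K A (f (a ⊗ₜ[K] (b ⊗ₜ[K] c)))) h2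
  have H3 := congrArg (fun f => f (a ⊗ₜ[K] (b ⊗ₜ[K] c))) h3
  simp only [LinearMap.comp_apply, LinearMap.sub_apply, map_sub,
    LinearMap.lTensor_tmul, LinearMap.rTensor_tmul,
    LinearEquiv.coe_coe, TensorProduct.assoc_symm_tmul] at H1 H2 H3
  rw [H1, H2, H3, key (Tt (a ⊗ₜ[K] (b ⊗ₜ[K] c)))]
end

section
/- Let (A, R, S, ω₁, ω₂) be a double curved Rota-Baxter system whose curvatures satisfy ω₁(a⊗b)c = aω₂(b⊗c). Define T(a⊗b) = R(a)⊗b + a⊗S(b) and 𝒯(a⊗b⊗c) = R(a)⊗R(b)⊗c + R(a)⊗b⊗S(c) + a⊗S(b)⊗S(c). Then T is a double curved weak pseudotwistor with weak companion 𝒯 and curvatures ω₁, ω₂. -/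
open TensorProduct

/-- For a double curved Rota-Baxter system with ω₁(a⊗b)c = aω₂(b⊗c),
T(a⊗b) = R(a)⊗b + a⊗S(b) is a double curved weak pseudotwistor with weak
companion Tt(a⊗b⊗c) = R(a)⊗R(b)⊗c + R(a)⊗b⊗S(c) + a⊗S(b)⊗S(c) and
curvatures ω₁, ω₂. -/
theorem doubleCurved_RotaBaxter_gives_weakPseudotwistor
    {K A : Type*} [Field K] [Ring A] [Algebra K A]
    (R S : A →ₗ[K] A) (w1 w2 : A ⊗[K] A →ₗ[K] A)
    (hR : ∀ a b : A, R a * R b = R (R a * b + a * S b) + w1 (a ⊗ₜ[K] b))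
    (hS : ∀ a b : A, S a * S b = S (R a * b + a * S b) + w2 (a ⊗ₜ[K] b))
    (hw : ∀ a b c : A, w1 (a ⊗ₜ[K] b) * c = a * w2 (b ⊗ₜ[K] c))
    (T : A ⊗[K] A →ₗ[K] A ⊗[K] A)
    (hT : T = TensorProduct.map R LinearMap.id + TensorProduct.map LinearMap.id S)
    (Tt : A ⊗[K] (A ⊗[K] A) →ₗ[K] A ⊗[K] (A ⊗[K] A))
    (hTt : Tt = TensorProduct.map R (TensorProduct.map R LinearMap.id)
        + TensorProduct.map R (TensorProduct.map LinearMap.id S)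
        + TensorProduct.map LinearMap.id (TensorProduct.map S S)) :
    -- T ∘ (id ⊗ (μ∘T)) = (id ⊗ μ) ∘ Tt − id ⊗ w2
    (T ∘ₗ LinearMap.lTensor A (LinearMap.mul' K A ∘ₗ T)
        = LinearMap.lTensor A (LinearMap.mul' K A) ∘ₗ Tt
          - LinearMap.lTensor A w2) ∧
    -- T ∘ ((μ∘T) ⊗ id) = (μ ⊗ id) ∘ Tt − w1 ⊗ id
    (T ∘ₗ (LinearMap.rTensor A (LinearMap.mul' K A ∘ₗ T)
            ∘ₗ (TensorProduct.assoc K A A A).symm.toLinearMap)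
        = (LinearMap.rTensor A (LinearMap.mul' K A)
            ∘ₗ (TensorProduct.assoc K A A A).symm.toLinearMap) ∘ₗ Tt
          - LinearMap.rTensor A w1
            ∘ₗ (TensorProduct.assoc K A A A).symm.toLinearMap) ∧
    -- μ ∘ (w1 ⊗ id) = μ ∘ (id ⊗ w2)
    (LinearMap.mul' K A ∘ₗ (LinearMap.rTensor A w1
            ∘ₗ (TensorProduct.assoc K A A A).symm.toLinearMap)
        = LinearMap.mul' K A ∘ₗ LinearMap.lTensor A w2) := by
  have hR' : ∀ a b : A, R (R a * b) + R (a * S b) = R a * R b - w1 (a ⊗ₜ[K] b) := by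
    intro a b; rw [← map_add, hR a b]; abel
  have hS' : ∀ a b : A, S (R a * b) + S (a * S b) = S a * S b - w2 (a ⊗ₜ[K] b) := by
    intro a b; rw [← map_add, hS a b]; abel
  refine ⟨?_, ?_, ?_⟩
  · ext a b c
    simp [hT, hTt, TensorProduct.tmul_add, mul_add, add_mul]
    rw [← TensorProduct.tmul_add a, hS']
    simp [TensorProduct.tmul_sub]
    abel
  · ext a b c
    simp [hT, hTt, TensorProduct.add_tmul, mul_add, add_mul]
    rw [← TensorProduct.add_tmul _ _ c, hR']
    simp [TensorProduct.sub_tmul]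
    abel
  · ext a b c
    simp [hw]
end

section
/- Let A be an algebra with unit 1, R: A→A a linear map, and define ω(a⊗b) = −aR(1)b. If (A, A, R, R, ω) is a curved O-operator system associated to the regular bimodule (A, L, R) (i.e. R(a)R(b) = R(R(a)b + aR(b) − aR(1)b) for all a,b), then a∗b = R(a)b + aR(b) − aR(1)b defines an associative product on A. -/
/-- A TD-operator R (curved O-operator system with ω(a⊗b) = −aR(1)b) induces
the associative product a∗b = R(a)b + aR(b) − aR(1)b. -/
theorem TD_operator_gives_associative
    {K A : Type*} [Field K] [Ring A] [Algebra K A]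
    (R : A →ₗ[K] A)
    (hR : ∀ a b : A, R a * R b = R (R a * b + a * R b - a * R 1 * b))
    (ast : A → A → A)
    (hast : ∀ a b : A, ast a b = R a * b + a * R b - a * R 1 * b) :
    ∀ a b c : A, ast (ast a b) c = ast a (ast b c) := by
  have h : ∀ b : A, R 1 * R b = R b * R 1 := by
    intro b
    rw [hR, hR]
    congr 1
    noncomm_ring
  intro a b c
  simp only [hast]
  rw [← hR, ← hR]
  have key : ∀ x : A, R 1 * (R b * x) = R b * (R 1 * x) := by
    intro x
    rw [← mul_assoc, h, mul_assoc]
  noncomm_ring [key]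
end
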